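/- Let n and p be positive integers, set μ_p = min(n,p) and μ_p* = p + 1 - μ_p. Then for any meromorphic function f, N_p(r,0;f^n) ≤ μ_p · N_{μ_p*}(r,0;f). -/

import Mathlib

open Filter MeasureTheory Metric Finset
open scoped Classical

namespace Nev

/-- The Nevanlinna proximity function `m(r,g)`: the circle average of `log⁺‖g‖`. -/
noncomputable def prox (g : ℂ → ℂ) (r : ℝ) : ℝ :=
  (2 * Real.pi)⁻¹ * ∫ θ in (0:ℝ)..(2 * Real.pi),
    Real.log (max ‖g (r * Complex.exp (θ * Complex.I))‖ 1)

/-- The meromorphic order of `g` at `z` (junk value `0` if `g` is not meromorphic at `z`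
or vanishes identically near `z`). -/
noncomputable def mOrder (g : ℂ → ℂ) (z : ℂ) : ℤ :=
  if h : MeromorphicAt g z then (meromorphicOrderAt g z).untopD 0 else 0

/-- The multiplicity of `z` as a zero of `g`. -/
noncomputable def zeroMult (g : ℂ → ℂ) (z : ℂ) : ℕ := (mOrder g z).toNat

/-- The multiplicity of `z` as a pole of `g`. -/
noncomputable def poleMult (g : ℂ → ℂ) (z : ℂ) : ℕ := (-(mOrder g z)).toNat

/-- The unintegrated counting function `n(t)` attached to a multiplicity function `μ`. -/
noncomputable def counts (μ : ℂ → ℕ) (t : ℝ) : ℝ :=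
  ∑' z : ℂ, (Metric.closedBall (0:ℂ) t).indicator (fun w => (μ w : ℝ)) z

/-- The integrated counting function `N(r)` attached to a multiplicity function `μ`. -/
noncomputable def N (μ : ℂ → ℕ) (r : ℝ) : ℝ :=
  (∫ t in (0:ℝ)..r, (counts μ t - counts μ 0) / t) + counts μ 0 * Real.log r

/-- `N(r,∞;g)`. -/
noncomputable def Npoles (g : ℂ → ℂ) : ℝ → ℝ := N (poleMult g)

/-- `N̄(r,∞;g)`. -/
noncomputable def NbarPoles (g : ℂ → ℂ) : ℝ → ℝ := N (fun z => min (poleMult g z) 1)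

/-- `N(r,0;g)`. -/
noncomputable def Nzeros (g : ℂ → ℂ) : ℝ → ℝ := N (zeroMult g)

/-- The truncated counting function `N_p(r,0;g)`. -/
noncomputable def NzerosTrunc (p : ℕ) (g : ℂ → ℂ) : ℝ → ℝ :=
  N (fun z => min (zeroMult g z) p)

/-- `N̄(r,0;g)`. -/
noncomputable def NbarZeros (g : ℂ → ℂ) : ℝ → ℝ := NzerosTrunc 1 g

/-- `N̄_{(j}(r,0;g)`: reduced counting function of zeros of multiplicity at least `j`. -/
noncomputable def NbarZerosGe (j : ℕ) (g : ℂ → ℂ) : ℝ → ℝ :=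
  N (fun z => if j ≤ zeroMult g z then 1 else 0)

/-- The Nevanlinna characteristic `T(r,g)`. -/
noncomputable def charT (g : ℂ → ℂ) (r : ℝ) : ℝ := prox g r + Npoles g r

/-- `s` is a quantity of type `S(r,f)`: `s = o(T(r,f))` as `r → ∞` outside a set of
finite Lebesgue measure. -/
def SmallRe (f : ℂ → ℂ) (s : ℝ → ℝ) : Prop :=
  ∃ E : Set ℝ, volume E < ⊤ ∧
    Tendsto (fun r => s r / charT f r) (atTop ⊓ 𝓟 Eᶜ) (nhds 0)

/-- `a` is a small function with respect to `f`: `T(r,a) = S(r,f)`. -/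
def SmallFn (f a : ℂ → ℂ) : Prop := SmallRe f (charT a)

/-- The deficiency `δ_p(0,g)`. -/
noncomputable def defic (p : ℕ) (g : ℂ → ℂ) : ℝ :=
  1 - limsup (fun r => NzerosTrunc p g r / charT g r) atTop

/-- `Θ(0,g)`. -/
noncomputable def Theta0 (g : ℂ → ℂ) : ℝ :=
  1 - limsup (fun r => NbarZeros g r / charT g r) atTop

/-- `Θ(∞,g)`. -/
noncomputable def ThetaInf (g : ℂ → ℂ) : ℝ :=
  1 - limsup (fun r => NbarPoles g r / charT g r) atTop

/-- `g` and `h` share the value `0` with weight `l` (`E_l(0;g) = E_l(0;h)`);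
`l = 0` is IM sharing. -/
def Share0 (l : ℕ) (g h : ℂ → ℂ) : Prop :=
  ∀ z, min (zeroMult g z) (l + 1) = min (zeroMult h z) (l + 1)

/-- `f` is meromorphic on `ℂ` and non-constant. -/
def MeroNC (f : ℂ → ℂ) : Prop :=
  (∀ z, MeromorphicAt f z) ∧ ¬ ∃ c : ℂ, ∀ z, f z = c

/-- The multiplicity of `z` as an `a`-point of `f`, for `a ∈ ℂ ∪ {∞}`
(`none` denotes `∞`). -/
noncomputable def multAt (f : ℂ → ℂ) (a : Option ℂ) (z : ℂ) : ℕ :=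
  match a with
  | some c => zeroMult (fun w => f w - c) z
  | none => poleMult f z

/-- The value at `z` of the differential polynomial
`P[f] = Σ_c b_c · f^{n_{0c}} (f')^{n_{1c}} ⋯ (f^{(k)})^{n_{kc}}`. -/
noncomputable def diffPoly {ι : Type*} [Fintype ι] (k : ℕ) (b : ι → ℂ → ℂ)
    (nn : ι → ℕ → ℕ) (f : ℂ → ℂ) : ℂ → ℂ := fun z =>
  ∑ c : ι, b c z * ∏ i ∈ Finset.range (k + 1), iteratedDeriv i f z ^ nn c i

end Nev
namespace NevAux

open Nev

lemma zeroMult_pow (f : ℂ → ℂ) (hf : ∀ z, MeromorphicAt f z) (n : ℕ) (hn : 0 < n) (z : ℂ) :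
    zeroMult (fun w => f w ^ n) z = n * zeroMult f z := by
  have hfn : MeromorphicAt (fun w => f w ^ n) z := (hf z).pow n
  by_cases htop : meromorphicOrderAt f z = ⊤
  · have h2 : meromorphicOrderAt (fun w => f w ^ n) z = ⊤ := by
      rw [meromorphicOrderAt_eq_top_iff] at htop ⊢
      filter_upwards [htop] with w hw
      simp [hw, zero_pow hn.ne']
    simp [zeroMult, mOrder, hf z, hfn, htop, h2]
  · obtain ⟨m, hm⟩ := WithTop.ne_top_iff_exists.mp htop
    obtain ⟨g, hg, hgz, hev⟩ := (meromorphicOrderAt_eq_int_iff (n := m) (hf z)).mp hm.symm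
    have h2 : meromorphicOrderAt (fun w => f w ^ n) z = ((n : ℤ) * m : ℤ) := by
      rw [meromorphicOrderAt_eq_int_iff hfn]
      refine ⟨fun w => g w ^ n, hg.pow n, pow_ne_zero n hgz, ?_⟩
      filter_upwards [hev] with w hw
      rw [hw, smul_eq_mul, smul_eq_mul, mul_pow, ← zpow_natCast ((w - z) ^ m) n, ← zpow_mul,
        mul_comm m (n : ℤ)]
    have h3 : zeroMult f z = m.toNat := by simp [zeroMult, mOrder, hf z, ← hm]
    have h4 : zeroMult (fun w => f w ^ n) z = ((n : ℤ) * m).toNat := by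
      unfold zeroMult mOrder
      rw [dif_pos hfn, h2, WithTop.untopD_coe]
    rw [h3, h4]
    rcases le_or_gt 0 m with h | h
    · obtain ⟨k, rfl⟩ := Int.eq_ofNat_of_zero_le h
      rw [← Nat.cast_mul, Int.toNat_natCast, Int.toNat_natCast]
    · have : (n : ℤ) * m ≤ 0 := mul_nonpos_of_nonneg_of_nonpos (by positivity) h.le
      rw [Int.toNat_of_nonpos this, Int.toNat_of_nonpos h.le, mul_zero]

lemma eventually_zeroMult_eq_zero (f : ℂ → ℂ) (hf : ∀ z, MeromorphicAt f z) (z : ℂ) :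
    ∀ᶠ w in nhdsWithin z {z}ᶜ, zeroMult f w = 0 := by
  by_cases htop : meromorphicOrderAt f z = ⊤
  · rw [meromorphicOrderAt_eq_top_iff, eventually_nhdsWithin_iff] at htop
    rw [eventually_nhdsWithin_iff]
    obtain ⟨U, hU, hUo, hzU⟩ := _root_.eventually_nhds_iff.mp htop
    refine _root_.eventually_nhds_iff.mpr ⟨U, ?_, hUo, hzU⟩
    intro w hw hwz
    have h2 : meromorphicOrderAt f w = ⊤ := by
      rw [meromorphicOrderAt_eq_top_iff]
      have h1 : ∀ᶠ u in nhds w, u ∈ U := hUo.mem_nhds hw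
      have h2 : ∀ᶠ u in nhds w, u ≠ z := eventually_ne_nhds hwz
      apply Filter.Eventually.filter_mono nhdsWithin_le_nhds
      filter_upwards [h1, h2] with u h1u h2u
      exact hU u h1u h2u
    simp [zeroMult, mOrder, hf w, h2]
  · obtain ⟨m, hm⟩ := WithTop.ne_top_iff_exists.mp htop
    obtain ⟨g, hg, hgz, hev⟩ := (meromorphicOrderAt_eq_int_iff (n := m) (hf z)).mp hm.symm
    rw [eventually_nhdsWithin_iff] at hev
    obtain ⟨U, hU, hUo, hzU⟩ := _root_.eventually_nhds_iff.mp hev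
    have hgne : ∀ᶠ w in nhds z, g w ≠ 0 := hg.continuousAt.eventually_ne hgz
    obtain ⟨V, hV, hVo, hzV⟩ := _root_.eventually_nhds_iff.mp hgne
    have hga := hg.eventually_analyticAt
    obtain ⟨A, hA, hAo, hzA⟩ := _root_.eventually_nhds_iff.mp hga
    rw [eventually_nhdsWithin_iff]
    refine _root_.eventually_nhds_iff.mpr ⟨U ∩ V ∩ A, ?_, (hUo.inter hVo).inter hAo, ⟨⟨hzU, hzV⟩, hzA⟩⟩
    rintro w ⟨⟨hwU, hwV⟩, hwA⟩ hwz
    have hanz : AnalyticAt ℂ (fun u => (u - z) ^ m) w := by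
      have hid : AnalyticAt ℂ (fun u : ℂ => u - z) w := analyticAt_id.sub analyticAt_const
      induction m using Int.rec with
      | ofNat k => simpa [zpow_natCast] using hid.fun_pow k
      | negSucc k =>
        have := (hid.fun_pow (k + 1)).fun_inv (pow_ne_zero _ (sub_ne_zero.mpr hwz))
        simpa [zpow_negSucc] using this
    have h0 : meromorphicOrderAt f w = ((0 : ℤ) : WithTop ℤ) := by
      rw [meromorphicOrderAt_eq_int_iff (hf w)]
      refine ⟨fun u => (u - z) ^ m • g u, hanz.smul (hA w hwA), ?_, ?_⟩
      · exact smul_ne_zero (zpow_ne_zero _ (sub_ne_zero.mpr hwz)) (hV w hwV)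
      · have h1 : ∀ᶠ u in nhds w, u ∈ U := hUo.mem_nhds hwU
        have h2 : ∀ᶠ u in nhds w, u ≠ z := eventually_ne_nhds hwz
        apply Filter.Eventually.filter_mono nhdsWithin_le_nhds
        filter_upwards [h1, h2] with u h1u h2u
        simp [hU u h1u h2u]
    simp [zeroMult, mOrder, hf w, h0]

lemma zeroSet_finite (f : ℂ → ℂ) (hf : ∀ z, MeromorphicAt f z) (t : ℝ) :
    ({z : ℂ | zeroMult f z ≠ 0} ∩ Metric.closedBall 0 t).Finite := by
  by_contra h
  rw [← Set.not_infinite, not_not] at h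
  obtain ⟨x, hxK, hx⟩ := h.exists_accPt_of_subset_isCompact (isCompact_closedBall 0 t)
    Set.inter_subset_right
  have hev := eventually_zeroMult_eq_zero f hf x
  have hne : (nhdsWithin x {x}ᶜ ⊓ Filter.principal
      ({z : ℂ | zeroMult f z ≠ 0} ∩ Metric.closedBall 0 t)).NeBot := hx
  have hcon : ∀ᶠ w in nhdsWithin x {x}ᶜ ⊓ Filter.principal
      ({z : ℂ | zeroMult f z ≠ 0} ∩ Metric.closedBall 0 t),
      zeroMult f w = 0 ∧ zeroMult f w ≠ 0 := by
    apply Filter.Eventually.and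
    · exact hev.filter_mono inf_le_left
    · exact Filter.eventually_inf_principal.mpr (Filter.Eventually.of_forall fun w hw => hw.1)
  obtain ⟨w, hw⟩ := hcon.exists
  exact hw.2 hw.1

noncomputable def annul (μ : ℂ → ℕ) (t : ℝ) : ℝ :=
  ∑' z : ℂ, ((Metric.closedBall (0:ℂ) t \ {0}).indicator (fun w => (μ w : ℝ))) z

lemma summable_ind (μ : ℂ → ℕ)
    (hfin : ∀ t : ℝ, ({z : ℂ | μ z ≠ 0} ∩ Metric.closedBall 0 t).Finite)
    {s : Set ℂ} {t : ℝ} (hs : s ⊆ Metric.closedBall 0 t) :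
    Summable (s.indicator fun w => (μ w : ℝ)) := by
  apply summable_of_finite_support
  apply (hfin t).subset
  intro z hz
  rw [Function.mem_support] at hz
  by_cases hzs : z ∈ s
  · rw [Set.indicator_of_mem hzs] at hz
    exact ⟨Nat.cast_ne_zero.mp hz, hs hzs⟩
  · rw [Set.indicator_of_notMem hzs] at hz
    exact absurd rfl hz

lemma counts_zero (μ : ℂ → ℕ) : counts μ 0 = μ 0 := by
  unfold counts
  rw [Metric.closedBall_zero]
  have h : ∀ b : ℂ, b ≠ 0 → (({0} : Set ℂ).indicator (fun w => (μ w : ℝ))) b = 0 := by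
    intro b hb
    apply Set.indicator_of_notMem
    simpa using hb
  rw [tsum_eq_single (0 : ℂ) h]
  exact Set.indicator_of_mem rfl (fun w => (μ w : ℝ))

lemma counts_eq (μ : ℂ → ℕ)
    (hfin : ∀ t : ℝ, ({z : ℂ | μ z ≠ 0} ∩ Metric.closedBall 0 t).Finite)
    (t : ℝ) (ht : 0 ≤ t) : counts μ t = μ 0 + annul μ t := by
  unfold counts annul
  have key : ∀ z : ℂ, (Metric.closedBall (0:ℂ) t).indicator (fun w => (μ w : ℝ)) z
      = ({0} : Set ℂ).indicator (fun w => (μ w : ℝ)) z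
        + (Metric.closedBall (0:ℂ) t \ {0}).indicator (fun w => (μ w : ℝ)) z := by
    intro z
    by_cases hz : z = 0
    · subst hz
      simp [Set.indicator_apply, Metric.mem_closedBall_self ht]
    · simp [Set.indicator_apply, hz]
  calc (∑' z : ℂ, (Metric.closedBall (0:ℂ) t).indicator (fun w => (μ w : ℝ)) z)
      = ∑' z : ℂ, (({0} : Set ℂ).indicator (fun w => (μ w : ℝ)) z
        + (Metric.closedBall (0:ℂ) t \ {0}).indicator (fun w => (μ w : ℝ)) z) := by
        exact tsum_congr key
    _ = (∑' z : ℂ, ({0} : Set ℂ).indicator (fun w => (μ w : ℝ)) z)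
        + ∑' z : ℂ, (Metric.closedBall (0:ℂ) t \ {0}).indicator (fun w => (μ w : ℝ)) z := by
        refine Summable.tsum_add (summable_ind μ hfin (t := 0) ?_) (summable_ind μ hfin (t := t) ?_)
        · intro z hz; simp_all [Metric.mem_closedBall]
        · exact Set.diff_subset
    _ = (μ 0 : ℝ) + ∑' z : ℂ, (Metric.closedBall (0:ℂ) t \ {0}).indicator (fun w => (μ w : ℝ)) z := by
        congr 1
        have h : ∀ b : ℂ, b ≠ 0 → (({0} : Set ℂ).indicator (fun w => (μ w : ℝ))) b = 0 := by
          intro b hb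
          apply Set.indicator_of_notMem
          simpa using hb
        rw [tsum_eq_single (0 : ℂ) h]
        exact Set.indicator_of_mem rfl (fun w => (μ w : ℝ))

lemma annul_nonneg (μ : ℂ → ℕ) (t : ℝ) : 0 ≤ annul μ t :=
  tsum_nonneg fun z => Set.indicator_nonneg (fun a _ => by positivity) z

lemma annul_mono (μ : ℂ → ℕ)
    (hfin : ∀ t : ℝ, ({z : ℂ | μ z ≠ 0} ∩ Metric.closedBall 0 t).Finite) :
    Monotone (annul μ) := by
  intro t1 t2 h
  apply Summable.tsum_le_tsum _ (summable_ind μ hfin Set.diff_subset) (summable_ind μ hfin Set.diff_subset)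
  intro z
  apply Set.indicator_le_indicator_of_subset
    (Set.diff_subset_diff_left (Metric.closedBall_subset_closedBall h))
  intro a; positivity

lemma annul_le (μ1 μ2 : ℂ → ℕ) (c : ℕ)
    (hfin1 : ∀ t : ℝ, ({z : ℂ | μ1 z ≠ 0} ∩ Metric.closedBall 0 t).Finite)
    (hfin2 : ∀ t : ℝ, ({z : ℂ | μ2 z ≠ 0} ∩ Metric.closedBall 0 t).Finite)
    (hle : ∀ z, μ1 z ≤ c * μ2 z) (t : ℝ) :
    annul μ1 t ≤ (c : ℝ) * annul μ2 t := by
  unfold annul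
  rw [← tsum_mul_left]
  apply Summable.tsum_le_tsum _ (summable_ind μ1 hfin1 Set.diff_subset)
    ((summable_ind μ2 hfin2 Set.diff_subset).mul_left _)
  intro z
  by_cases hz : z ∈ Metric.closedBall (0:ℂ) t \ {0}
  · rw [Set.indicator_of_mem hz, Set.indicator_of_mem hz]
    exact_mod_cast hle z
  · rw [Set.indicator_of_notMem hz, Set.indicator_of_notMem hz, mul_zero]

lemma annul_eventually_zero (μ : ℂ → ℕ)
    (hfin : ∀ t : ℝ, ({z : ℂ | μ z ≠ 0} ∩ Metric.closedBall 0 t).Finite) :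
    ∃ ε : ℝ, 0 < ε ∧ ε ≤ 1 ∧ ∀ t : ℝ, t < ε → annul μ t = 0 := by
  set Z : Set ℂ := ({z : ℂ | μ z ≠ 0} ∩ Metric.closedBall 0 1) \ {0} with hZdef
  have hZ : Z.Finite := (hfin 1).sdiff
  have hexists : ∃ ε : ℝ, 0 < ε ∧ ε ≤ 1 ∧ ∀ z ∈ Z, ε ≤ ‖z‖ := by
    by_cases hne : Z.Nonempty
    · set s : Finset ℝ := hZ.toFinset.image (fun z => ‖z‖) with hs
      have hsne : s.Nonempty := Finset.image_nonempty.mpr (Set.Finite.toFinset_nonempty hZ |>.mpr hne)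
      refine ⟨min (s.min' hsne) 1, ?_, min_le_right _ _, ?_⟩
      · rw [lt_min_iff]
        refine ⟨?_, one_pos⟩
        obtain ⟨z, hzs, hzn⟩ := Finset.mem_image.mp (s.min'_mem hsne)
        rw [← hzn]
        have : z ≠ 0 := (hZ.mem_toFinset.mp hzs).2
        exact norm_pos_iff.mpr this
      · intro z hz
        exact le_trans (min_le_left _ _) (s.min'_le _ (Finset.mem_image_of_mem _ (hZ.mem_toFinset.mpr hz)))
    · exact ⟨1, one_pos, le_refl 1, fun z hz => absurd ⟨z, hz⟩ hne⟩
  obtain ⟨ε, hε0, hε1, hεZ⟩ := hexists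
  refine ⟨ε, hε0, hε1, fun t ht => ?_⟩
  unfold annul
  convert tsum_zero with z
  by_cases hz : z ∈ Metric.closedBall (0:ℂ) t \ {0}
  · rw [Set.indicator_of_mem hz]
    obtain ⟨hz1, hz2⟩ := hz
    rw [Metric.mem_closedBall, dist_zero_right] at hz1
    by_cases hμ : μ z = 0
    · simp [hμ]
    · exfalso
      have hz1' : z ∈ Metric.closedBall (0:ℂ) 1 := by
        rw [Metric.mem_closedBall, dist_zero_right]
        exact hz1.trans (ht.le.trans hε1)
      have hzZ : z ∈ Z := ⟨⟨hμ, hz1'⟩, hz2⟩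
      have := hεZ z hzZ
      linarith
  · rw [Set.indicator_of_notMem hz]

lemma annul_div_intervalIntegrable (μ : ℂ → ℕ)
    (hfin : ∀ t : ℝ, ({z : ℂ | μ z ≠ 0} ∩ Metric.closedBall 0 t).Finite)
    (r : ℝ) (hr : 0 ≤ r) :
    IntervalIntegrable (fun t => annul μ t / t) MeasureTheory.volume 0 r := by
  obtain ⟨ε, hε0, hε1, hεz⟩ := annul_eventually_zero μ hfin
  have hmeas : Measurable (fun t => annul μ t / t) :=
    ((annul_mono μ hfin).measurable).div measurable_id
  rw [intervalIntegrable_iff]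
  rw [Set.uIoc_of_le hr]
  refine MeasureTheory.Integrable.mono' (g := fun _ => annul μ r / ε)
    (MeasureTheory.integrableOn_const measure_Ioc_lt_top.ne)
    hmeas.aestronglyMeasurable ?_
  rw [MeasureTheory.ae_restrict_iff' measurableSet_Ioc]
  apply Filter.Eventually.of_forall
  intro t ht
  obtain ⟨ht0, htr⟩ := ht
  have hAt : 0 ≤ annul μ t := annul_nonneg μ t
  rw [Real.norm_eq_abs, abs_of_nonneg (div_nonneg hAt ht0.le)]
  by_cases htε : t < ε
  · rw [hεz t htε, zero_div]
    exact div_nonneg (annul_nonneg μ r) hε0.le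
  · push_neg at htε
    exact div_le_div₀ (annul_nonneg μ r) (annul_mono μ hfin htr) hε0 htε

lemma N_le_mul (μ1 μ2 : ℂ → ℕ) (c : ℕ)
    (hfin1 : ∀ t : ℝ, ({z : ℂ | μ1 z ≠ 0} ∩ Metric.closedBall 0 t).Finite)
    (hfin2 : ∀ t : ℝ, ({z : ℂ | μ2 z ≠ 0} ∩ Metric.closedBall 0 t).Finite)
    (hle : ∀ z, μ1 z ≤ c * μ2 z) (r : ℝ) (hr : 1 ≤ r) :
    N μ1 r ≤ (c : ℝ) * N μ2 r := by
  have hr0 : (0:ℝ) ≤ r := zero_le_one.trans hr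
  unfold N
  have hcongr : ∀ μ : ℂ → ℕ,
      (∀ t' : ℝ, ({z : ℂ | μ z ≠ 0} ∩ Metric.closedBall 0 t').Finite) →
      (∫ t in (0:ℝ)..r, (counts μ t - counts μ 0) / t)
        = ∫ t in (0:ℝ)..r, annul μ t / t := by
    intro μ hfin
    apply intervalIntegral.integral_congr
    intro t ht
    rw [Set.uIcc_of_le hr0] at ht
    show (counts μ t - counts μ 0) / t = annul μ t / t
    rw [counts_eq μ hfin t ht.1, counts_zero μ]
    ring_nf
  rw [hcongr μ1 hfin1, hcongr μ2 hfin2, counts_zero μ1, counts_zero μ2]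
  rw [mul_add, ← intervalIntegral.integral_const_mul]
  have h1 : (∫ t in (0:ℝ)..r, annul μ1 t / t)
      ≤ ∫ t in (0:ℝ)..r, (c : ℝ) * (annul μ2 t / t) := by
    apply intervalIntegral.integral_mono_on hr0
      (annul_div_intervalIntegrable μ1 hfin1 r hr0)
      ((annul_div_intervalIntegrable μ2 hfin2 r hr0).const_mul _)
    intro t ht
    rcases eq_or_lt_of_le ht.1 with h0 | h0
    · have : annul μ1 0 = 0 := by
        obtain ⟨ε, hε0, _, hεz⟩ := annul_eventually_zero μ1 hfin1
        exact hεz 0 hε0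
      have h2 : annul μ2 0 = 0 := by
        obtain ⟨ε, hε0, _, hεz⟩ := annul_eventually_zero μ2 hfin2
        exact hεz 0 hε0
      rw [← h0, this, h2]
      simp
    · rw [mul_div_assoc']
      apply div_le_div_of_nonneg_right ?_ h0.le
      exact annul_le μ1 μ2 c hfin1 hfin2 hle t
  have h2 : (μ1 0 : ℝ) * Real.log r ≤ (c : ℝ) * ((μ2 0 : ℝ) * Real.log r) := by
    rw [← mul_assoc]
    apply mul_le_mul_of_nonneg_right _ (Real.log_nonneg hr)
    exact_mod_cast hle 0
  linarith


lemma key_ineq (n p t : ℕ) (hn : 0 < n) (hp : 0 < p) :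
    min (n * t) p ≤ min n p * min t (p + 1 - min n p) := by
  set μ := min n p with hμ
  have hμ1 : 1 ≤ μ := le_min hn hp
  have hμp : μ ≤ p := min_le_right n p
  rcases le_or_gt (p + 1 - μ) t with h | h
  · rw [min_eq_right h]
    have h2 : p ≤ μ * (p + 1 - μ) := by
      have h3 : p + 1 - μ = (p - μ) + 1 := by omega
      rw [h3, Nat.mul_add, Nat.mul_one]
      have h4 : p - μ ≤ μ * (p - μ) := Nat.le_mul_of_pos_left _ hμ1
      omega
    exact le_trans (min_le_right _ _) h2
  · rw [min_eq_left (by omega : t ≤ p + 1 - μ)]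
    rcases le_total n p with hnp | hpn
    · rw [hμ, min_eq_left hnp]
      exact min_le_left _ _
    · have hμ2 : μ = p := min_eq_right hpn
      have ht0 : t = 0 := by omega
      subst ht0
      simp

end NevAux


/-- For positive integers `n`, `p`, with `μ_p = min n p` and
`μ_p* = p + 1 - μ_p`, and any meromorphic `f`, `N_p(r,0;fⁿ) ≤ μ_p · N_{μ_p*}(r,0;f)`. -/
theorem stmt_2 (n p : ℕ) (hn : 0 < n) (hp : 0 < p) (f : ℂ → ℂ)
    (hf : ∀ z, MeromorphicAt f z) :
    ∀ r : ℝ, 1 ≤ r →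
      Nev.NzerosTrunc p (fun z => f z ^ n) r
        ≤ (min n p : ℝ) * Nev.NzerosTrunc (p + 1 - min n p) f r := by
  intro r hr
  have hfn : ∀ z, MeromorphicAt (fun w => f w ^ n) z := fun z => (hf z).pow n
  unfold Nev.NzerosTrunc
  rw [← Nat.cast_min]
  apply NevAux.N_le_mul _ _ (min n p) ?_ ?_ ?_ r hr
  · intro t
    apply (NevAux.zeroSet_finite (fun w => f w ^ n) hfn t).subset
    apply Set.inter_subset_inter_left
    intro z hz
    simp only [Set.mem_setOf_eq] at hz ⊢
    intro h0
    rw [h0] at hz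
    simp at hz
  · intro t
    apply (NevAux.zeroSet_finite f hf t).subset
    apply Set.inter_subset_inter_left
    intro z hz
    simp only [Set.mem_setOf_eq] at hz ⊢
    intro h0
    rw [h0] at hz
    simp at hz
  · intro z
    rw [NevAux.zeroMult_pow f hf n hn z]
    exact NevAux.key_ineq n p (Nev.zeroMult f z) hn hp
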